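/- For any binary constant-weight code C of length n, constant weight w, and maximum pairwise Hamming correlation λ (i.e., any two distinct codewords share at most λ common 1-positions), if w² − nλ > 0 then |C| ≤ ⌊n(w−λ)/(w² − nλ)⌋. -/

import Mathlib

/-- Johnson bound: for a binary constant-weight code of length `n`, weight `w`, and
maximum pairwise Hamming correlation `λ`, if `w² − nλ > 0` then
`|C| ≤ ⌊n(w−λ)/(w² − nλ)⌋`. -/
theorem stmt_3 (n w lam : ℕ) (C : Finset (Finset (Fin n)))
    (hw : ∀ c ∈ C, c.card = w)
    (hcorr : ∀ c ∈ C, ∀ c' ∈ C, c ≠ c' → (c ∩ c').card ≤ lam)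
    (h : n * lam < w ^ 2) :
    C.card ≤ n * (w - lam) / (w ^ 2 - n * lam) := by
  classical
  rcases C.eq_empty_or_nonempty with hC | hCne
  · simp [hC]
  set M := C.card with hM
  have hM1 : 1 ≤ M := Finset.card_pos.mpr hCne
  obtain ⟨c0, hc0⟩ := hCne
  have hwn : w ≤ n := by
    have h1 := hw c0 hc0
    have h2 : c0.card ≤ n := by
      simpa using Finset.card_le_univ c0
    omega
  have hw1 : 1 ≤ w := by nlinarith
  have hlamw : lam < w := by
    have : n * lam < n * w := lt_of_lt_of_le h (by nlinarith)
    exact lt_of_mul_lt_mul_left this (Nat.zero_le n)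
  set d : Fin n → ℕ := fun i => (C.filter (fun c => i ∈ c)).card with hd
  have key1 : ∑ i, d i = M * w := by
    have : ∑ i, d i = ∑ i : Fin n, ∑ c ∈ C, (if i ∈ c then 1 else 0) := by
      refine Finset.sum_congr rfl fun i _ => ?_
      exact Finset.card_filter _ _
    rw [this, Finset.sum_comm]
    have : ∀ c ∈ C, (∑ i : Fin n, (if i ∈ c then 1 else 0)) = w := by
      intro c hc
      simp [Finset.sum_ite_mem, hw c hc]
    rw [Finset.sum_congr rfl this]
    simp [mul_comm, hM]
  have key2 : ∑ i, d i ^ 2 = ∑ c ∈ C, ∑ c' ∈ C, (c ∩ c').card := by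
    have e : ∀ i : Fin n, d i ^ 2 =
        ∑ c ∈ C, ∑ c' ∈ C, ((if i ∈ c then 1 else 0) * (if i ∈ c' then 1 else 0)) := by
      intro i
      rw [show d i = ∑ c ∈ C, (if i ∈ c then 1 else 0) from Finset.card_filter _ _,
        sq, Finset.sum_mul_sum]
    rw [Finset.sum_congr rfl fun i _ => e i, Finset.sum_comm]
    refine Finset.sum_congr rfl fun c _ => ?_
    rw [Finset.sum_comm]
    refine Finset.sum_congr rfl fun c' _ => ?_
    have : ∀ i : Fin n, (if i ∈ c then 1 else 0) * (if i ∈ c' then 1 else 0)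
        = if i ∈ c ∩ c' then 1 else 0 := by
      intro i; by_cases h1 : i ∈ c <;> by_cases h2 : i ∈ c' <;> simp [h1, h2]
    rw [Finset.sum_congr rfl fun i _ => this i, Finset.sum_ite_mem,
      Finset.univ_inter, Finset.card_eq_sum_ones]
  have key3 : ∑ c ∈ C, ∑ c' ∈ C, (c ∩ c').card ≤ M * (w + (M - 1) * lam) := by
    have : ∀ c ∈ C, ∑ c' ∈ C, (c ∩ c').card ≤ w + (M - 1) * lam := by
      intro c hc
      rw [← Finset.sum_erase_add _ _ hc]
      have h1 : ∑ c' ∈ C.erase c, (c' ∩ c).card ≤ (M - 1) * lam := by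
        have := Finset.sum_le_card_nsmul (C.erase c) (fun c' => (c' ∩ c).card) lam
          (fun c' hc' => hcorr c' (Finset.mem_of_mem_erase hc') c hc
            (Finset.ne_of_mem_erase hc'))
        simpa [Finset.card_erase_of_mem hc, smul_eq_mul] using this
      have h2 : ∑ c' ∈ C.erase c, (c ∩ c').card = ∑ c' ∈ C.erase c, (c' ∩ c).card := by
        refine Finset.sum_congr rfl fun c' _ => by rw [Finset.inter_comm]
      have h3 : (c ∩ c).card = w := by simp [hw c hc]
      omega
    calc ∑ c ∈ C, ∑ c' ∈ C, (c ∩ c').card ≤ ∑ _c ∈ C, (w + (M - 1) * lam) :=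
          Finset.sum_le_sum this
      _ = M * (w + (M - 1) * lam) := by simp [mul_comm, hM]
  -- Cauchy-Schwarz over ℤ
  have cauchy : (M * w) ^ 2 ≤ n * (M * (w + (M - 1) * lam)) := by
    have hCS : ((∑ i, (d i : ℤ)) ^ 2) ≤ (n : ℤ) * ∑ i, (d i : ℤ) ^ 2 := by
      simpa using sq_sum_le_card_mul_sum_sq (s := (Finset.univ : Finset (Fin n)))
        (f := fun i => (d i : ℤ))
    have h2 : (M * w) ^ 2 ≤ n * (∑ i, d i ^ 2) := by
      rw [← key1]
      exact_mod_cast hCS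
    calc (M * w) ^ 2 ≤ n * (∑ i, d i ^ 2) := h2
      _ = n * (∑ c ∈ C, ∑ c' ∈ C, (c ∩ c').card) := by rw [key2]
      _ ≤ n * (M * (w + (M - 1) * lam)) := Nat.mul_le_mul_left n key3
  -- divide by M
  have main : M * w ^ 2 ≤ n * w + n * ((M - 1) * lam) := by
    have hA : (M * w) ^ 2 = M * (M * w ^ 2) := by ring
    have hB : n * (M * (w + (M - 1) * lam)) = M * (n * w + n * ((M - 1) * lam)) := by ring
    rw [hA, hB] at cauchy
    exact Nat.le_of_mul_le_mul_left cauchy (by omega)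
  rw [Nat.le_div_iff_mul_le (by omega : 0 < w ^ 2 - n * lam)]
  have e1 : M * (w ^ 2 - n * lam) + M * (n * lam) = M * w ^ 2 := by
    rw [← Nat.mul_add, Nat.sub_add_cancel h.le]
  have e2 : n * (w - lam) + n * lam = n * w := by
    rw [← Nat.mul_add, Nat.sub_add_cancel hlamw.le]
  have e3 : n * ((M - 1) * lam) + n * lam = M * (n * lam) := by
    have : (M - 1) * lam + lam = M * lam := by
      rw [Nat.sub_one_mul, Nat.sub_add_cancel (Nat.le_mul_of_pos_left lam hM1)]
    calc n * ((M - 1) * lam) + n * lam = n * ((M - 1) * lam + lam) := by ring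
      _ = n * (M * lam) := by rw [this]
      _ = M * (n * lam) := by ring
  omega
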